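/- Let G be a 2-connected graph and (A,B) a Whitney separation of G with A ∩ B = {u,v}. Then the graph G′ obtained from G by the Whitney switch with respect to (A,B) is 2-connected. -/

import Mathlib

open SimpleGraph

/-- A graph is 2-connected: connected, at least 3 vertices, no cut vertex. -/
def TwoConnected {V : Type*} [Fintype V] (G : SimpleGraph V) : Prop :=
  G.Connected ∧ 3 ≤ Fintype.card V ∧ ∀ v : V, (G.induce ({v}ᶜ : Set V)).Connected

/-- `(A,B)` is a Whitney separation of `G`: `A ∪ B = V(G)`, `A∖B ≠ ∅ ≠ B∖A`,
`|A ∩ B| = 2`, and no edge joins `A∖B` to `B∖A`. -/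
def WhitneySep {V : Type*} (G : SimpleGraph V) (A B : Set V) : Prop :=
  A ∪ B = Set.univ ∧ (A \ B).Nonempty ∧ (B \ A).Nonempty ∧
    (∃ u v : V, u ≠ v ∧ A ∩ B = {u, v}) ∧
    ∀ x ∈ A \ B, ∀ y ∈ B \ A, ¬G.Adj x y

open Classical in
/-- The Whitney switch with respect to a Whitney separation with side `B` and
separator `{u,v}`: for every `w ∈ B ∖ {u,v}`, each edge `uw` is replaced by `vw`
and each edge `vw` by `uw`; all other edges are unchanged. -/
noncomputable def wswitch {V : Type*} (G : SimpleGraph V) (B : Set V) (u v : V) :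
    SimpleGraph V where
  Adj x y :=
    if x ∈ B \ {u, v} ∨ y ∈ B \ {u, v} then
      G.Adj (Equiv.swap u v x) (Equiv.swap u v y)
    else G.Adj x y
  symm := by
    constructor
    intro x y hxy
    by_cases hc : x ∈ B \ {u, v} ∨ y ∈ B \ {u, v}
    · rw [if_pos hc] at hxy
      rw [if_pos hc.symm]
      exact hxy.symm
    · rw [if_neg hc] at hxy
      rw [if_neg fun hcc => hc hcc.symm]
      exact hxy.symm
  loopless := by
    constructor
    intro x hx
    by_cases hc : x ∈ B \ {u, v} ∨ x ∈ B \ {u, v}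
    · rw [if_pos hc] at hx
      exact G.loopless.irrefl _ hx
    · rw [if_neg hc] at hx
      exact G.loopless.irrefl _ hx



section Aux
variable {V : Type*}

/-- Reachability within a set of vertices. -/
def ReachIn (G : SimpleGraph V) (S : Set V) (a b : V) : Prop :=
  ∃ p : G.Walk a b, ∀ z ∈ p.support, z ∈ S

namespace ReachIn

variable {G H : SimpleGraph V} {S S' : Set V} {a b c : V}

lemma refl (ha : a ∈ S) : ReachIn G S a a := ⟨SimpleGraph.Walk.nil, by simpa using ha⟩

lemma mono (hS : S ⊆ S') (h : ReachIn G S a b) : ReachIn G S' a b := by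
  obtain ⟨p, hp⟩ := h; exact ⟨p, fun z hz => hS (hp z hz)⟩

lemma symm (h : ReachIn G S a b) : ReachIn G S b a := by
  obtain ⟨p, hp⟩ := h
  exact ⟨p.reverse, fun z hz => hp z (by simpa using hz)⟩

lemma trans (h1 : ReachIn G S a b) (h2 : ReachIn G S b c) : ReachIn G S a c := by
  obtain ⟨p, hp⟩ := h1; obtain ⟨q, hq⟩ := h2
  refine ⟨p.append q, fun z hz => ?_⟩
  rw [SimpleGraph.Walk.support_append] at hz
  rcases List.mem_append.mp hz with hz | hz
  · exact hp z hz
  · exact hq z (List.tail_subset _ hz)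

lemma cons (h : G.Adj a b) (ha : a ∈ S) (hr : ReachIn G S b c) : ReachIn G S a c := by
  obtain ⟨p, hp⟩ := hr
  refine ⟨SimpleGraph.Walk.cons h p, fun z hz => ?_⟩
  rw [SimpleGraph.Walk.support_cons] at hz
  rcases List.mem_cons.mp hz with rfl | hz
  · exact ha
  · exact hp z hz

end ReachIn

lemma reachIn_impl' {G H : SimpleGraph V} {S : Set V}
    (hadj : ∀ x ∈ S, ∀ y ∈ S, G.Adj x y → H.Adj x y) :
    ∀ {a b : V} (p : G.Walk a b), (∀ z ∈ p.support, z ∈ S) → ReachIn H S a b := by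
  intro a b p
  induction p with
  | nil => intro hp; exact ReachIn.refl (hp _ (by simp))
  | @cons a y b h q ih =>
    intro hp
    have ha : a ∈ S := hp a (by simp)
    have hy : y ∈ S := hp y (by simp)
    exact ReachIn.cons (hadj a ha y hy h) ha (ih fun z hz => hp z (by simp [hz]))

lemma reachIn_impl {G H : SimpleGraph V} {S : Set V} {a b : V}
    (hadj : ∀ x ∈ S, ∀ y ∈ S, G.Adj x y → H.Adj x y) (h : ReachIn G S a b) :
    ReachIn H S a b := by
  obtain ⟨p, hp⟩ := h; exact reachIn_impl' hadj p hp

lemma reachIn_map' {G H : SimpleGraph V} {S : Set V} (f : V → V)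
    (hadj : ∀ x ∈ S, ∀ y ∈ S, G.Adj x y → H.Adj (f x) (f y)) :
    ∀ {a b : V} (p : G.Walk a b), (∀ z ∈ p.support, z ∈ S) →
      ReachIn H (f '' S) (f a) (f b) := by
  intro a b p
  induction p with
  | @nil a => intro hp; exact ReachIn.refl ⟨a, hp a (by simp), rfl⟩
  | @cons a y b h q ih =>
    intro hp
    have ha : a ∈ S := hp a (by simp)
    have hy : y ∈ S := hp y (by simp)
    exact ReachIn.cons (hadj a ha y hy h) ⟨a, ha, rfl⟩ (ih fun z hz => hp z (by simp [hz]))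

lemma reachIn_map {G H : SimpleGraph V} {S : Set V} {a b : V} (f : V → V)
    (hadj : ∀ x ∈ S, ∀ y ∈ S, G.Adj x y → H.Adj (f x) (f y))
    (h : ReachIn G S a b) : ReachIn H (f '' S) (f a) (f b) := by
  obtain ⟨p, hp⟩ := h; exact reachIn_map' f hadj p hp

lemma reachIn_toInduce {G : SimpleGraph V} {S : Set V} :
    ∀ {a b : V} (p : G.Walk a b), (∀ z ∈ p.support, z ∈ S) →
      ∀ (ha : a ∈ S) (hb : b ∈ S), (G.induce S).Reachable ⟨a, ha⟩ ⟨b, hb⟩ := by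
  intro a b p
  induction p with
  | nil => intro _ ha hb; exact SimpleGraph.Reachable.refl _
  | @cons a y b h q ih =>
    intro hp ha hb
    have hy : y ∈ S := hp y (by simp)
    have hadj : (G.induce S).Adj ⟨a, ha⟩ ⟨y, hy⟩ := by
      simpa using h
    exact hadj.reachable.trans (ih (fun z hz => hp z (by simp [hz])) hy hb)

lemma reachIn_ofInduce {G : SimpleGraph V} {S : Set V} :
    ∀ {x y : S} (p : (G.induce S).Walk x y), ReachIn G S x.1 y.1 := by
  intro x y p
  induction p with
  | @nil x => exact ReachIn.refl x.2
  | @cons x y' z h q ih =>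
    exact ReachIn.cons (by simpa using h) x.2 ih

lemma exitLemma {G : SimpleGraph V} {T U E : Set V}
    (hTU : T ⊆ U)
    (hexit : ∀ ⦃x y : V⦄, G.Adj x y → x ∈ T → y ∈ U → y ∉ T → x ∈ E) :
    ∀ {a b : V} (p : G.Walk a b), (∀ z ∈ p.support, z ∈ U) → a ∈ T →
      ∃ c, c ∈ T ∧ ReachIn G T a c ∧ (c = b ∨ c ∈ E) := by
  intro a b p
  induction p with
  | @nil a => intro _ ha; exact ⟨a, ha, ReachIn.refl ha, Or.inl rfl⟩
  | @cons a y b h q ih =>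
    intro hsup ha
    by_cases hy : y ∈ T
    · obtain ⟨c, hc, hr, ho⟩ := ih (fun z hz => hsup z (by simp [hz])) hy
      exact ⟨c, hc, ReachIn.cons h ha hr, ho⟩
    · exact ⟨a, ha, ReachIn.refl ha, Or.inr (hexit h ha (hsup y (by simp)) hy)⟩

lemma sideReach {G : SimpleGraph V} {A B : Set V} {u v : V}
    (hU : A ∪ B = Set.univ) (huv : A ∩ B = {u, v}) (hne : u ≠ v)
    (hE : ∀ x ∈ A \ B, ∀ y ∈ B \ A, ¬G.Adj x y)
    (z : V) (hcon : (G.induce ({z}ᶜ : Set V)).Connected)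
    {x : V} (hx : x ∈ A) (hxz : x ≠ z) :
    ∃ c, c ∈ ({u, v} : Set V) ∧ c ≠ z ∧ ReachIn G (A \ {z}) x c := by
  classical
  have huA : u ∈ A := by
    have : u ∈ A ∩ B := by rw [huv]; simp
    exact this.1
  have hvA : v ∈ A := by
    have : v ∈ A ∩ B := by rw [huv]; simp
    exact this.1
  set t := if u = z then v else u with ht
  have htz : t ≠ z := by
    rw [ht]; split
    · next h => exact fun hq => hne (h.trans hq.symm)
    · next h => exact h
  have htA : t ∈ A := by rw [ht]; split; exacts [hvA, huA]
  have htuv : t ∈ ({u, v} : Set V) := by rw [ht]; split <;> simp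
  have hreach : (G.induce ({z}ᶜ : Set V)).Reachable
      ⟨x, Set.mem_compl_singleton_iff.mpr hxz⟩ ⟨t, Set.mem_compl_singleton_iff.mpr htz⟩ :=
    hcon.preconnected _ _
  obtain ⟨p⟩ := hreach
  obtain ⟨q, hq⟩ := reachIn_ofInduce p
  have hexit : ∀ ⦃a b : V⦄, G.Adj a b → a ∈ A \ {z} → b ∈ ({z}ᶜ : Set V) →
      b ∉ A \ {z} → a ∈ ({u, v} : Set V) := by
    intro a b hab haT hbU hbT
    have hbz : b ≠ z := Set.mem_compl_singleton_iff.mp hbU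
    have hbA : b ∉ A := fun hbA => hbT ⟨hbA, by simpa using hbz⟩
    have hbB : b ∈ B := by
      have : b ∈ A ∪ B := hU ▸ Set.mem_univ b
      rcases this with h | h
      · exact absurd h hbA
      · exact h
    by_cases haB : a ∈ B
    · rw [← huv]; exact ⟨haT.1, haB⟩
    · exact absurd hab (hE a ⟨haT.1, haB⟩ b ⟨hbB, hbA⟩)
  obtain ⟨c, hcT, hr, hor⟩ := exitLemma (T := A \ {z}) (U := ({z}ᶜ : Set V)) (E := {u, v})
    (fun y hy => Set.mem_compl_singleton_iff.mpr (by simpa using hy.2))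
    hexit q hq ⟨hx, by simpa using hxz⟩
  refine ⟨c, ?_, by simpa using hcT.2, hr⟩
  rcases hor with rfl | hc
  · exact htuv
  · exact hc

end Aux

open Classical in
lemma wswitch_adj {V : Type*} (G : SimpleGraph V) (B : Set V) (u v x y : V) :
    (wswitch G B u v).Adj x y ↔
      if x ∈ B \ {u, v} ∨ y ∈ B \ {u, v} then
        G.Adj (Equiv.swap u v x) (Equiv.swap u v y)
      else G.Adj x y := Iff.rfl

/-- The Whitney switch of a 2-connected graph with respect to a Whitney separation
is 2-connected. -/
theorem stmt13 {V : Type*} [Fintype V] (G : SimpleGraph V)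
    (A B : Set V) (u v : V)
    (hG : TwoConnected G) (hsep : WhitneySep G A B) (huv : A ∩ B = {u, v}) :
    TwoConnected (wswitch G B u v) := by
  classical
  obtain ⟨hGc, hcard, hdel⟩ := hG
  obtain ⟨hU, hAB, hBA, ⟨u', v', hu'v', hset⟩, hE⟩ := hsep
  have hne : u ≠ v := by
    have hset2 : ({u, v} : Set V) = {u', v'} := huv ▸ hset
    intro h
    apply hu'v'
    have h1 : u' ∈ ({u, v} : Set V) := by rw [hset2]; simp
    have h2 : v' ∈ ({u, v} : Set V) := by rw [hset2]; simp
    subst h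
    simp only [Set.mem_insert_iff, Set.mem_singleton_iff, or_self] at h1 h2
    rw [h1, h2]
  have huAB : u ∈ A ∩ B := by rw [huv]; simp
  have hvAB : v ∈ A ∩ B := by rw [huv]; simp
  have huA : u ∈ A := huAB.1
  have huB : u ∈ B := huAB.2
  have hvA : v ∈ A := hvAB.1
  have hvB : v ∈ B := hvAB.2
  set G' := wswitch G B u v with hG'
  set σ := Equiv.swap u v with hσ
  have hσu : σ u = v := Equiv.swap_apply_left u v
  have hσv : σ v = u := Equiv.swap_apply_right u v
  have hσσ : ∀ x, σ (σ x) = x := fun x => Equiv.swap_apply_self u v x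
  have hσB : ∀ x ∈ B, σ x ∈ B := by
    intro x hx
    by_cases h1 : x = u
    · subst h1; rw [hσu]; exact hvB
    by_cases h2 : x = v
    · subst h2; rw [hσv]; exact huB
    rw [hσ, Equiv.swap_apply_of_ne_of_ne h1 h2]; exact hx
  have hσBimg : σ '' B = B := by
    apply Set.Subset.antisymm
    · rintro _ ⟨x, hx, rfl⟩; exact hσB x hx
    · intro x hx; exact ⟨σ x, hσB x hx, hσσ x⟩
  have himg : ∀ z : V, σ '' (B \ {z}) = B \ {σ z} := by
    intro z
    rw [Set.image_diff (Equiv.injective σ), hσBimg, Set.image_singleton]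
  have hσuv : ∀ c ∈ ({u, v} : Set V), σ c ∈ ({u, v} : Set V) := by
    intro c hc
    simp only [Set.mem_insert_iff, Set.mem_singleton_iff] at hc
    rcases hc with rfl | rfl
    · rw [hσu]; simp
    · rw [hσv]; simp
  -- adjacency descriptions
  have hnotBd : ∀ x ∈ A, x ∉ B \ ({u, v} : Set V) := by
    intro x hxA hx
    exact hx.2 (by rw [← huv]; exact ⟨hxA, hx.1⟩)
  have adjA : ∀ x ∈ A, ∀ y ∈ A, (G'.Adj x y ↔ G.Adj x y) := by
    intro x hx y hy
    rw [hG', wswitch_adj, if_neg]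
    rintro (h | h)
    · exact hnotBd x hx h
    · exact hnotBd y hy h
  have adjB : ∀ x ∈ B, ∀ y ∈ B, (G'.Adj x y ↔ G.Adj (σ x) (σ y)) := by
    intro x hx y hy
    rw [hG', wswitch_adj]
    by_cases h : x ∈ B \ ({u, v} : Set V) ∨ y ∈ B \ ({u, v} : Set V)
    · rw [if_pos h]
    · rw [if_neg h]
      push_neg at h
      have hx2 : x ∈ ({u, v} : Set V) := by
        by_contra hc; exact h.1 ⟨hx, hc⟩
      have hy2 : y ∈ ({u, v} : Set V) := by
        by_contra hc; exact h.2 ⟨hy, hc⟩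
      simp only [Set.mem_insert_iff, Set.mem_singleton_iff] at hx2 hy2
      rcases hx2 with rfl | rfl <;> rcases hy2 with rfl | rfl
      · rw [hσu]; exact iff_of_false (G.loopless.irrefl _) (G.loopless.irrefl _)
      · rw [hσu, hσv]; exact G.adj_comm _ _
      · rw [hσu, hσv]; exact G.adj_comm _ _
      · rw [hσv]; exact iff_of_false (G.loopless.irrefl _) (G.loopless.irrefl _)
  -- transfers from G-reachability to G'-reachability
  have TA : ∀ S : Set V, S ⊆ A → ∀ a b : V, ReachIn G S a b → ReachIn G' S a b := by
    intro S hS a b h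
    exact reachIn_impl (fun x hx y hy hxy => (adjA x (hS hx) y (hS hy)).mpr hxy) h
  have TB : ∀ S : Set V, S ⊆ B → ∀ a b : V,
      ReachIn G S a b → ReachIn G' (σ '' S) (σ a) (σ b) := by
    intro S hS a b h
    refine reachIn_map σ (fun x hx y hy hxy => ?_) h
    rw [adjB (σ x) (hσB x (hS hx)) (σ y) (hσB y (hS hy)), hσσ, hσσ]
    exact hxy
  have hEsymm : ∀ x ∈ B \ A, ∀ y ∈ A \ B, ¬G.Adj x y := fun x hx y hy h => hE y hy x hx h.symm
  have hUB : B ∪ A = Set.univ := by rw [Set.union_comm]; exact hU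
  have huvB : B ∩ A = {u, v} := by rw [Set.inter_comm]; exact huv
  have MA : ∀ z : V, ∀ x ∈ A, x ≠ z →
      ∃ c, c ∈ ({u, v} : Set V) ∧ c ≠ z ∧ ReachIn G (A \ {z}) x c :=
    fun z x hx hxz => sideReach hU huv hne hE z (hdel z) hx hxz
  have MB : ∀ z : V, ∀ x ∈ B, x ≠ z →
      ∃ c, c ∈ ({u, v} : Set V) ∧ c ≠ z ∧ ReachIn G (B \ {z}) x c :=
    fun z x hx hxz => sideReach hUB huvB hne hEsymm z (hdel z) hx hxz
  -- u–v links inside each side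
  obtain ⟨x₁, hx₁⟩ := hAB
  obtain ⟨x₀, hx₀⟩ := hBA
  have hx₁u : x₁ ≠ u := fun h => hx₁.2 (h ▸ huB)
  have hx₁v : x₁ ≠ v := fun h => hx₁.2 (h ▸ hvB)
  have hx₀u : x₀ ≠ u := fun h => hx₀.2 (h ▸ huA)
  have hx₀v : x₀ ≠ v := fun h => hx₀.2 (h ▸ hvA)
  have pick : ∀ c : V, c ∈ ({u, v} : Set V) → c ≠ v → c = u := by
    intro c hc hcv
    simp only [Set.mem_insert_iff, Set.mem_singleton_iff] at hc
    rcases hc with rfl | rfl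
    · rfl
    · exact absurd rfl hcv
  have pick' : ∀ c : V, c ∈ ({u, v} : Set V) → c ≠ u → c = v := by
    intro c hc hcu
    simp only [Set.mem_insert_iff, Set.mem_singleton_iff] at hc
    rcases hc with rfl | rfl
    · exact absurd rfl hcu
    · rfl
  have linkGA : ReachIn G A u v := by
    obtain ⟨c1, hc1, hc1v, hr1⟩ := MA v x₁ hx₁.1 hx₁v
    obtain ⟨c2, hc2, hc2u, hr2⟩ := MA u x₁ hx₁.1 hx₁u
    rw [pick c1 hc1 hc1v] at hr1
    rw [pick' c2 hc2 hc2u] at hr2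
    exact (hr1.symm.mono Set.diff_subset).trans (hr2.mono Set.diff_subset)
  have linkGB : ReachIn G B u v := by
    obtain ⟨c1, hc1, hc1v, hr1⟩ := MB v x₀ hx₀.1 hx₀v
    obtain ⟨c2, hc2, hc2u, hr2⟩ := MB u x₀ hx₀.1 hx₀u
    rw [pick c1 hc1 hc1v] at hr1
    rw [pick' c2 hc2 hc2u] at hr2
    exact (hr1.symm.mono Set.diff_subset).trans (hr2.mono Set.diff_subset)
  have linkA' : ReachIn G' A u v := TA A (le_refl _) u v linkGA
  have linkB' : ReachIn G' B u v := by
    have h := TB B (le_refl _) v u linkGB.symm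
    rwa [hσBimg, hσv, hσu] at h
  -- side reach facts for G'
  have NA : ∀ w : V, ∀ x ∈ A, x ≠ w →
      ∃ c, c ∈ ({u, v} : Set V) ∧ c ≠ w ∧ ReachIn G' (A \ {w}) x c := by
    intro w x hx hxw
    obtain ⟨c, hc, hcw, hr⟩ := MA w x hx hxw
    exact ⟨c, hc, hcw, TA _ Set.diff_subset _ _ hr⟩
  have NB : ∀ w : V, ∀ x ∈ B, x ≠ w →
      ∃ c, c ∈ ({u, v} : Set V) ∧ c ≠ w ∧ ReachIn G' (B \ {w}) x c := by
    intro w x hx hxw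
    obtain ⟨c, hc, hcw, hr⟩ := MB (σ w) (σ x) (hσB x hx) (fun h => hxw (σ.injective h))
    have h2 := TB _ Set.diff_subset _ _ hr
    rw [himg, hσσ, hσσ] at h2
    exact ⟨σ c, hσuv c hc, fun h => hcw (by rw [← h, hσσ]), h2⟩
  have linkw : ∀ w : V, u ≠ w → v ≠ w → ReachIn G' ({w}ᶜ : Set V) u v := by
    intro w hu hv
    by_cases hwB : w ∈ B
    · by_cases hwA : w ∈ A
      · exfalso
        have hw : w ∈ ({u, v} : Set V) := by rw [← huv]; exact ⟨hwA, hwB⟩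
        simp only [Set.mem_insert_iff, Set.mem_singleton_iff] at hw
        rcases hw with rfl | rfl
        · exact hu rfl
        · exact hv rfl
      · exact linkA'.mono (fun z hz => Set.mem_compl_singleton_iff.mpr fun h => hwA (h ▸ hz))
    · exact linkB'.mono (fun z hz => Set.mem_compl_singleton_iff.mpr fun h => hwB (h ▸ hz))
  -- the canonical hub for each deleted vertex
  have canon : ∀ w : V, ∃ t, t ∈ ({u, v} : Set V) ∧ t ≠ w ∧
      ∀ x : V, x ≠ w → ReachIn G' ({w}ᶜ : Set V) x t := by
    intro w
    set t := if u = w then v else u with ht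
    have htmem : t ∈ ({u, v} : Set V) := by rw [ht]; split <;> simp
    have htw : t ≠ w := by
      rw [ht]; split
      · next h => exact fun hq => hne (h.trans hq.symm)
      · next h => exact h
    refine ⟨t, htmem, htw, ?_⟩
    intro x hxw
    have hxAB : x ∈ A ∪ B := by rw [hU]; trivial
    have finish : ∀ c : V, c ∈ ({u, v} : Set V) → c ≠ w →
        ReachIn G' ({w}ᶜ : Set V) x c → ReachIn G' ({w}ᶜ : Set V) x t := by
      intro c hc hcw hr
      by_cases hct : c = t
      · rwa [hct] at hr
      · refine hr.trans ?_
        simp only [Set.mem_insert_iff, Set.mem_singleton_iff] at hc htmem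
        rcases hc with rfl | rfl <;> rcases htmem with h | h
        · exact absurd h.symm hct
        · rw [h] at htw ⊢; exact linkw w hcw htw
        · rw [h] at htw ⊢; exact (linkw w htw hcw).symm
        · exact absurd h.symm hct
    rcases hxAB with hxA | hxB
    · obtain ⟨c, hc, hcw, hr⟩ := NA w x hxA hxw
      exact finish c hc hcw
        (hr.mono fun z hz => Set.mem_compl_singleton_iff.mpr (by simpa using hz.2))
    · obtain ⟨c, hc, hcw, hr⟩ := NB w x hxB hxw
      exact finish c hc hcw
        (hr.mono fun z hz => Set.mem_compl_singleton_iff.mpr (by simpa using hz.2))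
  refine ⟨?_, hcard, ?_⟩
  · -- G' is connected
    have hreach : ∀ x : V, G'.Reachable x u := by
      intro x
      by_cases hxv : x = v
      · subst hxv
        obtain ⟨p, _⟩ := linkA'.symm
        exact ⟨p⟩
      · obtain ⟨t, htm, htv, hall⟩ := canon v
        have htu : t = u := pick t htm htv
        subst htu
        obtain ⟨p, _⟩ := hall x hxv
        exact ⟨p⟩
    rw [SimpleGraph.connected_iff]
    exact ⟨fun x y => (hreach x).trans (hreach y).symm, ⟨u⟩⟩
  · -- each vertex-deleted graph is connected
    intro w
    rw [SimpleGraph.connected_iff]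
    constructor
    · intro x y
      obtain ⟨t, htm, htw, hall⟩ := canon w
      have htmem : t ∈ ({w}ᶜ : Set V) := Set.mem_compl_singleton_iff.mpr htw
      obtain ⟨p, hp⟩ := hall x.1 (Set.mem_compl_singleton_iff.mp x.2)
      obtain ⟨q, hq⟩ := hall y.1 (Set.mem_compl_singleton_iff.mp y.2)
      have h1 := reachIn_toInduce p hp x.2 htmem
      have h2 := reachIn_toInduce q hq y.2 htmem
      exact h1.trans h2.symm
    · obtain ⟨y, hy⟩ := Fintype.exists_ne_of_one_lt_card (by omega) w
      exact ⟨⟨y, Set.mem_compl_singleton_iff.mpr hy⟩⟩
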